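/- For every k ∈ ℕ with k ≥ 1, every real solution x ≥ 1 of the equation U^k(x) = x is a rational number. Consequently, every U-cycle starts at a rational number. -/
import Mathlib


/-- The real 3x+1 function: `Ux = x/2` if `⌊x⌋` is even, `(3x+1)/2` if `⌊x⌋` is odd. -/
noncomputable def U (x : ℝ) : ℝ := if Even ⌊x⌋ then x / 2 else (3 * x + 1) / 2

lemma U_iter_form (k : ℕ) (x : ℝ) :
    ∃ (a : ℕ) (c : ℚ), U^[k] x = ((3 : ℝ) ^ a * x + (c : ℝ)) / 2 ^ k := by
  induction k with
  | zero => exact ⟨0, 0, by simp⟩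
  | succ n ih =>
    obtain ⟨a, c, h⟩ := ih
    rw [Function.iterate_succ_apply', h]
    unfold U
    by_cases he : Even ⌊((3 : ℝ) ^ a * x + (c : ℝ)) / 2 ^ n⌋
    · refine ⟨a, c, ?_⟩
      rw [if_pos he]
      push_cast
      ring
    · refine ⟨a + 1, 3 * c + 2 ^ n, ?_⟩
      rw [if_neg he]
      push_cast
      field_simp
      ring

/-- Every real solution `x ≥ 1` of `U^[k] x = x` (for `k ≥ 1`) is rational;
hence every `U`-cycle starts at a rational number. -/
theorem U_cycle_starts_rational (k : ℕ) (hk : 1 ≤ k) (x : ℝ) (hx : 1 ≤ x)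
    (hcyc : U^[k] x = x) : ∃ q : ℚ, x = (q : ℝ) := by
  obtain ⟨a, c, h⟩ := U_iter_form k x
  rw [h] at hcyc
  have hne : ((2 : ℚ) ^ k) ≠ 3 ^ a := by
    intro heq
    have h1 : (2 : ℕ) ^ k = 3 ^ a := by exact_mod_cast heq
    have h2 : Even ((2 : ℕ) ^ k) := Nat.even_pow.mpr ⟨even_two, by omega⟩
    have h3 : Odd ((3 : ℕ) ^ a) := Odd.pow (by decide)
    rw [h1] at h2
    exact (Nat.not_odd_iff_even.mpr h2) h3
  refine ⟨c / (2 ^ k - 3 ^ a), ?_⟩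
  have hne' : ((2 : ℝ) ^ k - 3 ^ a) ≠ 0 := by
    intro h0
    apply hne
    have : ((2 : ℝ) ^ k) = 3 ^ a := by linarith
    exact_mod_cast this
  have h2k : ((2 : ℝ) ^ k) ≠ 0 := by positivity
  push_cast [hne]
  field_simp at hcyc ⊢
  linarith [hcyc]
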